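/- The parametrization of the complex cone, Z with components x¹ = u¹cos u² cosh u⁴ - u³ sin u² sinh u⁴, x² = u¹ sin u² cosh u⁴ + u³ cos u² sinh u⁴, x³ = u¹, y¹ = u¹ sin u² sinh u⁴ + u³ cos u² cosh u⁴, y² = -u¹ cos u² sinh u⁴ + u³ sin u² cosh u⁴, y³ = u³, satisfies (x¹+iy¹)² + (x²+iy²)² - (x³+iy³)² = 0, and the induced metric with respect to the signature (+,+,+,-,-,-) form on ℝ⁶ has nonzero components exactly g₁₁ = -g₃₃ = 2, g₂₂ = -g₄₄ = (u¹)² - (u³)², g₂₄ = g₄₂ = 2u¹u³. -/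

import Mathlib

open Real

/-- Parametrization of the complex cone `(Z¹)² + (Z²)² - (Z³)² = 0` in
`ℂ³ ≅ ℝ⁶` (`i`-splitting: `(x¹,x²,x³,y¹,y²,y³)`). -/
noncomputable def Zcone (p : Fin 4 → ℝ) : Fin 6 → ℝ :=
  ![p 0 * cos (p 1) * cosh (p 3) - p 2 * sin (p 1) * sinh (p 3),
    p 0 * sin (p 1) * cosh (p 3) + p 2 * cos (p 1) * sinh (p 3),
    p 0,
    p 0 * sin (p 1) * sinh (p 3) + p 2 * cos (p 1) * cosh (p 3),
    -(p 0 * cos (p 1) * sinh (p 3)) + p 2 * sin (p 1) * cosh (p 3),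
    p 2]

/-- The bilinear form of signature `(+,+,+,-,-,-)` on `ℝ⁶`. -/
def ip6 (a b : Fin 6 → ℝ) : ℝ :=
  a 0 * b 0 + a 1 * b 1 + a 2 * b 2 - a 3 * b 3 - a 4 * b 4 - a 5 * b 5

/-- The tangent vector `∂ᵢZ`. -/
noncomputable def dZcone (i : Fin 4) (p : Fin 4 → ℝ) : Fin 6 → ℝ :=
  fun k => fderiv ℝ (fun q => Zcone q k) p (Pi.single i 1)

@[simp] lemma cons_val_five {α : Type*} {m : ℕ} (x : α)
    (u : Fin m.succ.succ.succ.succ.succ → α) :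
    Matrix.vecCons x u 5 =
      Matrix.vecHead (Matrix.vecTail (Matrix.vecTail (Matrix.vecTail (Matrix.vecTail u)))) :=
  rfl


noncomputable def dZmat (p : Fin 4 → ℝ) : Fin 4 → Fin 6 → ℝ :=
  ![![cos (p 1) * cosh (p 3), sin (p 1) * cosh (p 3), 1,
      sin (p 1) * sinh (p 3), -(cos (p 1) * sinh (p 3)), 0],
    ![-(p 0 * sin (p 1) * cosh (p 3)) - p 2 * cos (p 1) * sinh (p 3),
      p 0 * cos (p 1) * cosh (p 3) - p 2 * sin (p 1) * sinh (p 3), 0,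
      p 0 * cos (p 1) * sinh (p 3) - p 2 * sin (p 1) * cosh (p 3),
      p 0 * sin (p 1) * sinh (p 3) + p 2 * cos (p 1) * cosh (p 3), 0],
    ![-(sin (p 1) * sinh (p 3)), cos (p 1) * sinh (p 3), 0,
      cos (p 1) * cosh (p 3), sin (p 1) * cosh (p 3), 1],
    ![p 0 * cos (p 1) * sinh (p 3) - p 2 * sin (p 1) * cosh (p 3),
      p 0 * sin (p 1) * sinh (p 3) + p 2 * cos (p 1) * cosh (p 3), 0,
      p 0 * sin (p 1) * cosh (p 3) + p 2 * cos (p 1) * sinh (p 3),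
      -(p 0 * cos (p 1) * cosh (p 3)) + p 2 * sin (p 1) * sinh (p 3), 0]]

set_option maxHeartbeats 1000000 in
lemma dZcone_eq (p : Fin 4 → ℝ) (i : Fin 4) : dZcone i p = dZmat p i := by
  have h0 := hasFDerivAt_apply (𝕜 := ℝ) 0 p
  have h1 := hasFDerivAt_apply (𝕜 := ℝ) 1 p
  have h2 := hasFDerivAt_apply (𝕜 := ℝ) 2 p
  have h3 := hasFDerivAt_apply (𝕜 := ℝ) 3 p
  have hc := (Real.hasDerivAt_cos (p 1)).comp_hasFDerivAt p h1
  have hs := (Real.hasDerivAt_sin (p 1)).comp_hasFDerivAt p h1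
  have hch := (Real.hasDerivAt_cosh (p 3)).comp_hasFDerivAt p h3
  have hsh := (Real.hasDerivAt_sinh (p 3)).comp_hasFDerivAt p h3
  simp only [Function.comp_def] at hc hs hch hsh
  have H0 := (((h0.mul hc).mul hch).sub ((h2.mul hs).mul hsh)).fderiv
  have H1 := (((h0.mul hs).mul hch).add ((h2.mul hc).mul hsh)).fderiv
  have H2 := h0.fderiv
  have H3 := (((h0.mul hs).mul hsh).add ((h2.mul hc).mul hch)).fderiv
  have H4 := ((((h0.mul hc).mul hsh).neg).add ((h2.mul hs).mul hch)).fderiv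
  have H5 := h2.fderiv
  have e0 : dZcone i p 0 = dZmat p i 0 := by
    have efun : (fun q => Zcone q 0) = (fun q : Fin 4 → ℝ => q 0 * cos (q 1) * cosh (q 3) - q 2 * sin (q 1) * sinh (q 3)) := rfl
    show fderiv ℝ (fun q => Zcone q 0) p (Pi.single i 1) = _
    erw [efun, H0]
    fin_cases i <;> simp [dZmat, Pi.single_apply, Matrix.vecHead, Matrix.vecTail] <;> ring
  have e1 : dZcone i p 1 = dZmat p i 1 := by
    have efun : (fun q => Zcone q 1) = (fun q : Fin 4 → ℝ => q 0 * sin (q 1) * cosh (q 3) + q 2 * cos (q 1) * sinh (q 3)) := rfl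
    show fderiv ℝ (fun q => Zcone q 1) p (Pi.single i 1) = _
    erw [efun, H1]
    fin_cases i <;> simp [dZmat, Pi.single_apply, Matrix.vecHead, Matrix.vecTail] <;> ring
  have e2 : dZcone i p 2 = dZmat p i 2 := by
    have efun : (fun q => Zcone q 2) = (fun q : Fin 4 → ℝ => q 0) := rfl
    show fderiv ℝ (fun q => Zcone q 2) p (Pi.single i 1) = _
    rw [efun, H2]
    fin_cases i <;> simp [dZmat, Pi.single_apply, Matrix.vecHead, Matrix.vecTail]
  have e3 : dZcone i p 3 = dZmat p i 3 := by
    have efun : (fun q => Zcone q 3) = (fun q : Fin 4 → ℝ => q 0 * sin (q 1) * sinh (q 3) + q 2 * cos (q 1) * cosh (q 3)) := rfl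
    show fderiv ℝ (fun q => Zcone q 3) p (Pi.single i 1) = _
    erw [efun, H3]
    fin_cases i <;> simp [dZmat, Pi.single_apply, Matrix.vecHead, Matrix.vecTail] <;> ring
  have e4 : dZcone i p 4 = dZmat p i 4 := by
    have efun : (fun q => Zcone q 4) = (fun q : Fin 4 → ℝ => -(q 0 * cos (q 1) * sinh (q 3)) + q 2 * sin (q 1) * cosh (q 3)) := rfl
    show fderiv ℝ (fun q => Zcone q 4) p (Pi.single i 1) = _
    erw [efun, H4]
    fin_cases i <;> simp [dZmat, Pi.single_apply, Matrix.vecHead, Matrix.vecTail] <;> ring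
  have e5 : dZcone i p 5 = dZmat p i 5 := by
    have efun : (fun q => Zcone q 5) = (fun q : Fin 4 → ℝ => q 2) := rfl
    show fderiv ℝ (fun q => Zcone q 5) p (Pi.single i 1) = _
    rw [efun, H5]
    fin_cases i <;> simp [dZmat, Pi.single_apply, Matrix.vecHead, Matrix.vecTail] <;>
      try rfl
  funext k
  fin_cases k
  exacts [e0, e1, e2, e3, e4, e5]

set_option maxHeartbeats 1000000 in
/-- The map `Z` lies on the complex cone, `(x¹+iy¹)²+(x²+iy²)²-(x³+iy³)² = 0`,
and the induced metric has nonzero components exactly `g₁₁ = -g₃₃ = 2`,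
`g₂₂ = -g₄₄ = (u¹)² - (u³)²`, `g₂₄ = g₄₂ = 2u¹u³`. -/
theorem complex_cone_parametrization :
    ∀ p : Fin 4 → ℝ,
      ((Zcone p 0 : ℂ) + Complex.I * Zcone p 3) ^ 2
        + ((Zcone p 1 : ℂ) + Complex.I * Zcone p 4) ^ 2
        - ((Zcone p 2 : ℂ) + Complex.I * Zcone p 5) ^ 2 = 0 ∧
      ∀ i j : Fin 4,
        ip6 (dZcone i p) (dZcone j p) =
          !![2, 0, 0, 0;
             0, (p 0) ^ 2 - (p 2) ^ 2, 0, 2 * p 0 * p 2;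
             0, 0, -2, 0;
             0, 2 * p 0 * p 2, 0, -((p 0) ^ 2 - (p 2) ^ 2)] i j := by
  intro p
  have hsq : sin (p 1) ^ 2 + cos (p 1) ^ 2 = 1 := sin_sq_add_cos_sq (p 1)
  have h2' : cosh (p 3) ^ 2 - sinh (p 3) ^ 2 = 1 := by
    have := Real.cosh_sq' (p 3); linarith
  constructor
  · have hsqC : (sin (p 1) : ℂ) ^ 2 + (cos (p 1) : ℂ) ^ 2 = 1 := by exact_mod_cast hsq
    have h2C : (cosh (p 3) : ℂ) ^ 2 - (sinh (p 3) : ℂ) ^ 2 = 1 := by exact_mod_cast h2'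
    rw [show Zcone p 0 = p 0 * cos (p 1) * cosh (p 3) - p 2 * sin (p 1) * sinh (p 3) from rfl,
      show Zcone p 1 = p 0 * sin (p 1) * cosh (p 3) + p 2 * cos (p 1) * sinh (p 3) from rfl,
      show Zcone p 2 = p 0 from rfl,
      show Zcone p 3 = p 0 * sin (p 1) * sinh (p 3) + p 2 * cos (p 1) * cosh (p 3) from rfl,
      show Zcone p 4 = -(p 0 * cos (p 1) * sinh (p 3)) + p 2 * sin (p 1) * cosh (p 3) from rfl,
      show Zcone p 5 = p 2 from rfl]
    simp only [Complex.ofReal_sub, Complex.ofReal_add, Complex.ofReal_neg, Complex.ofReal_mul]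
    set A : ℂ := (p 0 : ℂ)
    set B : ℂ := (p 2 : ℂ)
    set c : ℂ := ((cos (p 1) : ℝ) : ℂ)
    set s : ℂ := ((sin (p 1) : ℝ) : ℂ)
    set ch : ℂ := ((cosh (p 3) : ℝ) : ℂ)
    set sh : ℂ := ((sinh (p 3) : ℝ) : ℂ)
    linear_combination ((A + Complex.I * B) ^ 2 * (ch ^ 2 + Complex.I ^ 2 * sh ^ 2)) * hsqC
      + (A + Complex.I * B) ^ 2 * h2C
      + ((A + Complex.I * B) ^ 2 * sh ^ 2
          - 2 * (A + Complex.I * B) * (c * ch + Complex.I * s * sh) * B * s * sh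
          + 2 * (A + Complex.I * B) * (s * ch - Complex.I * c * sh) * B * c * sh
          + (Complex.I ^ 2 + 1) * B ^ 2 * sh ^ 2 * (s ^ 2 + c ^ 2)) * Complex.I_sq
  · intro i j
    rw [dZcone_eq, dZcone_eq]
    fin_cases i <;> fin_cases j <;>
      simp [ip6, dZmat, Matrix.vecHead, Matrix.vecTail] <;>
      first
      | ring1
      | linear_combination (sin (p 1) ^ 2 + cos (p 1) ^ 2) * h2' + hsq
      | linear_combination (-(sin (p 1) ^ 2 + cos (p 1) ^ 2)) * h2' - hsq
      | linear_combination ((sin (p 1) ^ 2 + cos (p 1) ^ 2) * ((p 0) ^ 2 - (p 2) ^ 2)) * h2'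
          + ((p 0) ^ 2 - (p 2) ^ 2) * hsq
      | linear_combination (-((sin (p 1) ^ 2 + cos (p 1) ^ 2) * ((p 0) ^ 2 - (p 2) ^ 2))) * h2'
          - ((p 0) ^ 2 - (p 2) ^ 2) * hsq
      | linear_combination ((sin (p 1) ^ 2 + cos (p 1) ^ 2) * (2 * p 0 * p 2)) * h2'
          + (2 * p 0 * p 2) * hsq
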